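/- Let f : (a,b) → ℝ be continuous, and for t ∈ (a,b) define the lower left Dini derivative f'_{-,min}(t) = liminf_{s→t⁻} (f(s)-f(t))/(s-t) and the upper right Dini derivative f'_{+,max}(t) = limsup_{s→t⁺} (f(s)-f(t))/(s-t). Then for any t₀ ∈ (a,b), liminf_{t→t₀⁻} f'_{+,max}(t) ≤ f'_{-,min}(t₀). -/

import Mathlib

open Filter Set

/-- Upper right Dini derivative `f'_{+,max}(t)`, valued in the extended reals. -/
noncomputable def dPlus (f : ℝ → ℝ) (t : ℝ) : EReal :=
  Filter.limsup (fun s => (((f s - f t) / (s - t) : ℝ) : EReal)) (nhdsWithin t (Set.Ioi t))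

/-- Lower left Dini derivative `f'_{-,min}(t)`, valued in the extended reals. -/
noncomputable def dMinus (f : ℝ → ℝ) (t : ℝ) : EReal :=
  Filter.liminf (fun s => (((f s - f t) / (s - t) : ℝ) : EReal)) (nhdsWithin t (Set.Iio t))

theorem liminf_dPlus_le_dMinus (a b : ℝ) (f : ℝ → ℝ)
    (hf : ContinuousOn f (Set.Ioo a b)) (t₀ : ℝ) (ht₀ : t₀ ∈ Set.Ioo a b) :
    Filter.liminf (fun t => dPlus f t) (nhdsWithin t₀ (Set.Iio t₀)) ≤ dMinus f t₀ := by
  by_contra hlt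
  push_neg at hlt
  -- pick real q with dMinus f t₀ < q < liminf dPlus
  obtain ⟨q, hq1, hq2⟩ := EReal.exists_between_coe_real hlt
  -- pick real q' with dMinus f t₀ < q' < q
  obtain ⟨q', hq'1, hq'2⟩ := EReal.exists_between_coe_real hq1
  have hq'q : q' < q := by exact_mod_cast hq'2
  -- eventually in 𝓝[<] t₀, dPlus f t > q
  have hev : ∀ᶠ t in nhdsWithin t₀ (Set.Iio t₀), (q : EReal) < dPlus f t :=
    Filter.eventually_lt_of_lt_liminf hq2
  rw [Filter.eventually_iff, mem_nhdsLT_iff_exists_Ioo_subset] at hev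
  obtain ⟨l, hl, hsub⟩ := hev
  set δ := max l a with hδ
  have hδt : δ < t₀ := max_lt hl ht₀.1
  -- frequently in 𝓝[<] t₀, slope < q'
  have hfreq : ∃ᶠ s in nhdsWithin t₀ (Set.Iio t₀),
      (((f s - f t₀) / (s - t₀) : ℝ) : EReal) < (q' : EReal) :=
    Filter.frequently_lt_of_liminf_lt (by isBoundedDefault) hq'1
  have hmem : Set.Ioo δ t₀ ∈ nhdsWithin t₀ (Set.Iio t₀) :=
    Ioo_mem_nhdsLT_of_mem ⟨hδt, le_rfl⟩
  obtain ⟨s, hs1, hs2⟩ := (hfreq.and_eventually (Filter.eventually_of_mem hmem (fun _ h => h))).exists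
  have hslope : (f s - f t₀) / (s - t₀) < q' := by exact_mod_cast hs1
  have hsa : a < s := lt_of_le_of_lt (le_max_right l a) hs2.1
  have hst : s < t₀ := hs2.2
  -- key growth estimate: f t₀ - f s ≥ q' * (t₀ - s)
  have hIcc : Set.Icc s t₀ ⊆ Set.Ioo a b := fun x hx =>
    ⟨lt_of_lt_of_le hsa hx.1, lt_of_le_of_lt hx.2 ht₀.2⟩
  have hg : ContinuousOn (fun x => -f x) (Set.Icc s t₀) := ((hf.mono hIcc).neg)
  have key : -f t₀ ≤ -f s + (-q') * (t₀ - s) := by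
    refine image_le_of_liminf_slope_right_lt_deriv_boundary (f' := fun _ => -q)
      (B := fun x => -f s + (-q') * (x - s)) (B' := fun _ => -q') hg ?_ ?_ ?_ ?_ (right_mem_Icc.2 hst.le)
    · intro x hx r hr
      -- dPlus f x > q, so frequently slope f x z > q, hence slope (-f) x z < -q < r
      have hxδ : (q : EReal) < dPlus f x := hsub ⟨lt_of_lt_of_le (lt_of_le_of_lt (le_max_left l a) hs2.1) hx.1, hx.2⟩
      have hfr : ∃ᶠ z in nhdsWithin x (Set.Ioi x),
          (q : EReal) < (((f z - f x) / (z - x) : ℝ) : EReal) :=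
        Filter.frequently_lt_of_lt_limsup (by isBoundedDefault) hxδ
      refine hfr.mono fun z hz => ?_
      have hz' : q < (f z - f x) / (z - x) := by exact_mod_cast hz
      have : slope (fun x => -f x) x z = -((f z - f x) / (z - x)) := by
        simp [slope_def_field]; ring
      show slope (fun x => -f x) x z < r
      rw [this]
      have hr' : -q < r := hr
      linarith
    · simp
    · intro x
      simpa using (((hasDerivAt_id x).sub_const s).const_mul (-q')).const_add (-f s)
    · intro x _ _
      show -q < -q'
      linarith
  have : q' * (t₀ - s) ≤ f t₀ - f s := by linarith
  have hpos : (0:ℝ) < t₀ - s := by linarith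
  rw [div_lt_iff_of_neg (by linarith : s - t₀ < 0)] at hslope
  nlinarith
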